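/- arXiv:1304.7665 — 2 statements merged into one kernel-verified Lean document; each statement's English description precedes it below -/
import Mathlib

section
/- Every solution y : [t₀,∞) → ℝ of the sliding-mode differential equation ẏ = −χ(y), where χ is the saturated linear function with parameters γ, δ > 0, converges to 0 as t → ∞, and |y(t)| is monotone nonincreasing. -/
/-- The saturated linear function. -/
noncomputable def chi (γ δ : ℝ) (z : ℝ) : ℝ := if |z| ≤ δ then γ * z else γ * δ * Real.sign z

lemma chi_neg' (γ δ z : ℝ) : chi γ δ (-z) = -(chi γ δ z) := by
  unfold chi
  rw [abs_neg, Real.sign_neg]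
  split_ifs <;> ring

lemma mul_chi_nonneg (γ δ z : ℝ) (hγ : 0 < γ) (hδ : 0 < δ) : 0 ≤ z * chi γ δ z := by
  unfold chi
  split_ifs with h
  · nlinarith [sq_nonneg z]
  · rcases lt_trichotomy z 0 with hz | hz | hz
    · rw [Real.sign_of_neg hz]; nlinarith [mul_pos hγ hδ]
    · simp [hz]
    · rw [Real.sign_of_pos hz]; nlinarith [mul_pos hγ hδ]

lemma chi_ge (γ δ ε z : ℝ) (hγ : 0 < γ) (hδ : 0 < δ) (hε : 0 < ε) (hz : ε ≤ z) :
    min (γ * ε) (γ * δ) ≤ chi γ δ z := by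
  unfold chi
  split_ifs with h
  · refine le_trans (min_le_left _ _) ?_
    nlinarith
  · rw [Real.sign_of_pos (lt_of_lt_of_le hε hz)]
    refine le_trans (min_le_right _ _) ?_
    nlinarith

lemma pos_case (γ δ t₀ ε : ℝ) (hγ : 0 < γ) (hδ : 0 < δ) (hε : 0 < ε) (y : ℝ → ℝ)
    (hy : ∀ t ∈ Set.Ici t₀, HasDerivAt y (-(chi γ δ (y t))) t)
    (hpos : ∀ t ∈ Set.Ici t₀, ε ≤ y t) : False := by
  set c := min (γ * ε) (γ * δ) with hc
  have hc0 : 0 < c := lt_min (by positivity) (by positivity)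
  have hg : ∀ t ∈ Set.Ici t₀, HasDerivAt (fun t => y t + c * t) (-(chi γ δ (y t)) + c) t := by
    intro t ht
    have h1 : HasDerivAt (fun t : ℝ => c * t) c t := by
      simpa using (hasDerivAt_id t).const_mul c
    exact (hy t ht).add h1
  have hanti : AntitoneOn (fun t => y t + c * t) (Set.Ici t₀) := by
    apply antitoneOn_of_deriv_nonpos (convex_Ici t₀)
    · exact fun t ht => ((hg t ht).continuousAt).continuousWithinAt
    · intro t ht
      rw [interior_Ici] at ht
      exact ((hg t (Set.mem_Ici.mpr (le_of_lt (Set.mem_Ioi.mp ht)))).differentiableAt).differentiableWithinAt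
    · intro t ht
      rw [interior_Ici] at ht
      rw [(hg t (Set.mem_Ici.mpr (le_of_lt (Set.mem_Ioi.mp ht)))).deriv]
      have := chi_ge γ δ ε (y t) hγ hδ hε (hpos t (Set.mem_Ici.mpr (le_of_lt (Set.mem_Ioi.mp ht))))
      linarith
  set T := t₀ + (y t₀ - ε) / c + 1 with hT
  have hd0 : 0 ≤ y t₀ - ε := by have := hpos t₀ Set.self_mem_Ici; linarith
  have hq : c * ((y t₀ - ε) / c) = y t₀ - ε := by
    field_simp
  have hT0 : t₀ ≤ T := by
    have : 0 ≤ (y t₀ - ε) / c := div_nonneg hd0 (le_of_lt hc0)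
    simp only [hT]; linarith
  have h1 : y T + c * T ≤ y t₀ + c * t₀ := hanti (Set.self_mem_Ici) hT0 hT0
  have h2 : ε ≤ y T := hpos T hT0
  have h3 : c * T = c * t₀ + (y t₀ - ε) + c := by
    rw [hT]; ring_nf; ring_nf at hq; linarith [hq]
  linarith

lemma exists_small (γ δ t₀ ε : ℝ) (hγ : 0 < γ) (hδ : 0 < δ) (hε : 0 < ε) (y : ℝ → ℝ)
    (hy : ∀ t ∈ Set.Ici t₀, HasDerivAt y (-(chi γ δ (y t))) t) :
    ∃ T ∈ Set.Ici t₀, |y T| ≤ ε := by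
  by_contra h
  push_neg at h
  have hcont : ContinuousOn y (Set.Ici t₀) :=
    fun t ht => ((hy t ht).continuousAt).continuousWithinAt
  have hne : ∀ t ∈ Set.Ici t₀, y t ≠ 0 := by
    intro t ht h0
    have := h t ht
    rw [h0] at this
    simp at this
    linarith
  rcases lt_or_gt_of_ne (hne t₀ Set.self_mem_Ici) with hneg | hpos
  · -- y t₀ < 0 : apply pos_case to -y
    apply pos_case γ δ t₀ ε hγ hδ hε (fun t => -y t)
    · intro t ht
      have := (hy t ht).neg
      show HasDerivAt (fun t => -y t) (-(chi γ δ (-y t))) t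
      rw [chi_neg']
      exact this
    · intro t ht
      by_contra hcon
      push_neg at hcon
      have h1 : ε < |y t| := h t ht
      have h2 : ε < y t := by
        rcases abs_cases (y t) with ⟨he, _⟩ | ⟨he, _⟩
        · rw [he] at h1; exact h1
        · rw [he] at h1
          have hcon' : -(y t) < ε := hcon
          linarith
      have hsub : Set.Icc (y t₀) (y t) ⊆ y '' Set.Icc t₀ t := by
        apply intermediate_value_Icc (le_of_lt (lt_of_le_of_ne ht.out (fun hh => by
          rw [← hh] at h2; linarith)))
        exact hcont.mono Set.Icc_subset_Ici_self
      have h0mem : (0:ℝ) ∈ Set.Icc (y t₀) (y t) := ⟨le_of_lt hneg, by linarith⟩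
      obtain ⟨s, hs, hys⟩ := hsub h0mem
      exact hne s (Set.mem_Icc.mp hs).1 hys
  · -- y t₀ > 0 : apply pos_case directly
    apply pos_case γ δ t₀ ε hγ hδ hε y hy
    intro t ht
    by_contra hcon
    push_neg at hcon
    have h1 : ε < |y t| := h t ht
    have h2 : y t < -ε := by
      rcases abs_cases (y t) with ⟨he, _⟩ | ⟨he, _⟩
      · rw [he] at h1; linarith
      · rw [he] at h1; linarith
    have hsub : Set.Icc (y t) (y t₀) ⊆ y '' Set.Icc t₀ t := by
      apply intermediate_value_Icc' (le_of_lt (lt_of_le_of_ne ht.out (fun hh => by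
        rw [← hh] at h2; linarith)))
      exact hcont.mono (fun s hs => (Set.mem_Icc.mp hs).1)
    have h0mem : (0:ℝ) ∈ Set.Icc (y t) (y t₀) := ⟨by linarith, le_of_lt hpos⟩
    obtain ⟨s, hs, hys⟩ := hsub h0mem
    exact hne s (Set.mem_Icc.mp hs).1 hys

/-- Every solution of the sliding-mode equation `ẏ = −χ(y)` on `[t₀,∞)` converges to `0`
as `t → ∞`, and `|y(t)|` is monotone nonincreasing on `[t₀,∞)`. -/
theorem sliding_mode_convergence (γ δ t₀ : ℝ) (hγ : 0 < γ) (hδ : 0 < δ) (y : ℝ → ℝ)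
    (hy : ∀ t ∈ Set.Ici t₀, HasDerivAt y (-(chi γ δ (y t))) t) :
    Filter.Tendsto y Filter.atTop (nhds 0) ∧
    AntitoneOn (fun t => |y t|) (Set.Ici t₀) := by
  have hsq : ∀ t ∈ Set.Ici t₀,
      HasDerivAt (fun t => (y t)^2) (2 * y t * (-(chi γ δ (y t)))) t := by
    intro t ht
    have := (hy t ht).pow 2
    refine this.congr_deriv ?_
    simp
  have hanti2 : AntitoneOn (fun t => (y t)^2) (Set.Ici t₀) := by
    apply antitoneOn_of_deriv_nonpos (convex_Ici t₀)
    · exact fun t ht => (hsq t ht).continuousAt.continuousWithinAt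
    · intro t ht
      rw [interior_Ici] at ht
      exact (hsq t (Set.mem_Ici.mpr (le_of_lt (Set.mem_Ioi.mp ht)))).differentiableAt.differentiableWithinAt
    · intro t ht
      rw [interior_Ici] at ht
      rw [(hsq t (Set.mem_Ici.mpr (le_of_lt (Set.mem_Ioi.mp ht)))).deriv]
      have := mul_chi_nonneg γ δ (y t) hγ hδ
      nlinarith
  have habs : AntitoneOn (fun t => |y t|) (Set.Ici t₀) := by
    intro a ha b hb hab
    have h2 := hanti2 ha hb hab
    simp only at h2 ⊢
    rw [← Real.sqrt_sq_eq_abs, ← Real.sqrt_sq_eq_abs]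
    exact Real.sqrt_le_sqrt h2
  refine ⟨?_, habs⟩
  rw [NormedAddCommGroup.tendsto_nhds_zero]
  intro ε hε
  obtain ⟨T, hT, hle⟩ := exists_small γ δ t₀ (ε/2) hγ hδ (by linarith) y hy
  filter_upwards [Filter.eventually_ge_atTop T] with t ht
  have h1 : |y t| ≤ |y T| := habs hT (le_trans hT ht) ht
  calc ‖y t‖ = |y t| := rfl
    _ ≤ |y T| := h1
    _ ≤ ε/2 := hle
    _ < ε := by linarith
end

section
/- If the velocity vector of the robot rotates through a total angle 2π + β over a time interval while the vector from the robot to the nearest obstacle point rotates through a total angle at most β (both angles measured as continuous lifts), then there exist two times s₁ < s₂ within the interval at which the velocity is parallel to the robot-to-obstacle vector, pointing toward the obstacle at one time and away from it at the other. -/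
/-- Topological step in Lemma 6: if over `[t₀, t₁]` the (lifted) heading `φ_v` of the
velocity decreases by `2π + β` while the (lifted) heading `φ_r` of the robot-to-obstacle
vector changes by at most `β`, then there are times `s₁, s₂ ∈ [t₀, t₁]` at which the
velocity is antiparallel, respectively parallel, to the robot-to-obstacle vector. -/
theorem velocity_alignment_times (t₀ t₁ β : ℝ) (ht : t₀ ≤ t₁) (hβ : 0 ≤ β)
    (φv φr : ℝ → ℝ)
    (hφv : ContinuousOn φv (Set.Icc t₀ t₁)) (hφr : ContinuousOn φr (Set.Icc t₀ t₁))
    (hrot : φv t₀ - φv t₁ = 2 * Real.pi + β)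
    (hobs : |φr t₁ - φr t₀| ≤ β) :
    (∃ s₁ ∈ Set.Icc t₀ t₁, ∃ k : ℤ, φv s₁ - φr s₁ = Real.pi + 2 * Real.pi * k) ∧
    (∃ s₂ ∈ Set.Icc t₀ t₁, ∃ k : ℤ, φv s₂ - φr s₂ = 2 * Real.pi * k) := by
  set g : ℝ → ℝ := fun t => φv t - φr t with hg
  have hgc : ContinuousOn g (Set.Icc t₀ t₁) := hφv.sub hφr
  have hπ : (0:ℝ) < 2 * Real.pi := by positivity
  have hgap : g t₁ + 2 * Real.pi ≤ g t₀ := by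
    have h1 : -β ≤ φr t₁ - φr t₀ := (abs_le.mp hobs).1
    simp only [hg]
    linarith [hrot]
  have key : ∀ c : ℝ, ∃ s ∈ Set.Icc t₀ t₁, ∃ k : ℤ, g s = c + 2 * Real.pi * k := by
    intro c
    set k : ℤ := ⌈(g t₁ - c) / (2 * Real.pi)⌉ with hk
    have h1 : (g t₁ - c) / (2 * Real.pi) ≤ (k : ℝ) := Int.le_ceil _
    have h2 : (k : ℝ) < (g t₁ - c) / (2 * Real.pi) + 1 := Int.ceil_lt_add_one _
    have e : (g t₁ - c) / (2 * Real.pi) * (2 * Real.pi) = g t₁ - c :=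
      div_mul_cancel₀ _ (ne_of_gt hπ)
    have h1' : g t₁ - c ≤ (k:ℝ) * (2 * Real.pi) := by
      have := mul_le_mul_of_nonneg_right h1 hπ.le
      rwa [e] at this
    have h2' : (k:ℝ) * (2 * Real.pi) < g t₁ - c + 2 * Real.pi := by
      have := mul_lt_mul_of_pos_right h2 hπ
      rw [add_mul, e, one_mul] at this
      linarith
    have hmem : c + 2 * Real.pi * k ∈ Set.Icc (g t₁) (g t₀) := by
      constructor <;> [linarith; linarith [hgap]]
    have := intermediate_value_Icc' ht hgc hmem
    obtain ⟨s, hs, hgs⟩ := this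
    exact ⟨s, hs, k, hgs⟩
  exact ⟨key Real.pi, key 0 |>.imp fun s ⟨hs, k, hk⟩ => ⟨hs, k, by simpa using hk⟩⟩
end
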